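/- arXiv:1705.00529 — 2 statements merged into one kernel-verified Lean document; each statement's English description precedes it below -/
import Mathlib

section
/- (Pólya–Szegő inequality on the line) If u ∈ H^1(ℝ) is nonnegative, then its decreasing rearrangement u* onto ℝ⁺ satisfies ∫_{ℝ⁺} |(u*)'|² dx ≤ ∫_ℝ |u'|² dx. -/
open MeasureTheory Set Filter
open scoped ENNReal Topology

namespace PolyaSzegoAux

def E (u : ℝ → ℝ) (s t : ℝ) : Set ℝ := {y : ℝ | s < u y ∧ u y < t}

noncomputable def mu (u : ℝ → ℝ) (t : ℝ) : ℝ≥0∞ := volume {y : ℝ | t < u y}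

noncomputable def ust (u : ℝ → ℝ) (x : ℝ) : ℝ :=
  sInf {t : ℝ | 0 ≤ t ∧ mu u t ≤ ENNReal.ofReal x}

noncomputable def G (u : ℝ → ℝ) (x : ℝ) : ℝ :=
  ∫ y in {y : ℝ | ust u x < u y}, deriv u y ^ 2

variable {u : ℝ → ℝ}

theorem abs_mul_le_half (a b : ℝ) : |a * b| ≤ (a ^ 2 + b ^ 2) / 2 := by
  nlinarith [sq_nonneg (|a| - |b|), sq_abs a, sq_abs b, abs_mul a b, abs_nonneg (a*b)]

theorem hg'int (hu2 : MemLp u 2 (volume : Measure ℝ))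
    (hu2' : MemLp (deriv u) 2 (volume : Measure ℝ)) :
    Integrable (fun x => 2 * u x * deriv u x) (volume : Measure ℝ) := by
  have husq : Integrable (fun y => u y ^ 2) volume := hu2.integrable_sq
  have husq' : Integrable (fun y => deriv u y ^ 2) volume := hu2'.integrable_sq
  have hg : Integrable (fun x => (u x ^ 2 + deriv u x ^ 2)) volume := husq.add husq'
  have hmeas : AEStronglyMeasurable (fun x => u x * deriv u x) volume :=
    hu2.aestronglyMeasurable.mul hu2'.aestronglyMeasurable
  have : Integrable (fun x => u x * deriv u x) volume := by
    refine Integrable.mono' hg hmeas (Filter.Eventually.of_forall fun x => ?_)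
    have := abs_mul_le_half (u x) (deriv u x)
    have h2 : (u x ^ 2 + deriv u x ^ 2) / 2 ≤ u x ^ 2 + deriv u x ^ 2 := by
      nlinarith [sq_nonneg (u x), sq_nonneg (deriv u x)]
    calc ‖u x * deriv u x‖ = |u x * deriv u x| := rfl
      _ ≤ _ := le_trans this h2
  simpa [mul_assoc] using this.const_mul 2

theorem sq_deriv (hdiff : Differentiable ℝ u) (x : ℝ) :
    HasDerivAt (fun y => u y ^ 2) (2 * u x * deriv u x) x := by
  have h := ((hdiff x).hasDerivAt.fun_pow 2)
  simpa [pow_one, mul_comm, mul_assoc, mul_left_comm] using h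

theorem tendsto_sq_atTop (hu2 : MemLp u 2 (volume : Measure ℝ))
    (hdiff : Differentiable ℝ u)
    (hu2' : MemLp (deriv u) 2 (volume : Measure ℝ)) :
    Tendsto (fun x => u x ^ 2) atTop
      (𝓝 (u 0 ^ 2 + ∫ y in Ioi (0:ℝ), 2 * u y * deriv u y)) := by
  have hint := hg'int hu2 hu2'
  have key : ∀ x : ℝ, u x ^ 2 = u 0 ^ 2 + ∫ y in (0:ℝ)..x, 2 * u y * deriv u y := by
    intro x
    have := intervalIntegral.integral_eq_sub_of_hasDerivAt
      (f := fun y => u y ^ 2) (a := (0:ℝ)) (b := x) (fun y _ => sq_deriv hdiff y)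
      (hint.intervalIntegrable)
    linarith [this]
  have h2 : Tendsto (fun x : ℝ => ∫ y in (0:ℝ)..x, 2 * u y * deriv u y) atTop
      (𝓝 (∫ y in Ioi (0:ℝ), 2 * u y * deriv u y)) :=
    intervalIntegral_tendsto_integral_Ioi 0 hint.integrableOn tendsto_id
  have := tendsto_const_nhds.add h2 (f := fun _ : ℝ => u 0 ^ 2)
  refine Tendsto.congr (fun x => (key x).symm) this

theorem limit_zero {L : ℝ} (husq : Integrable (fun y => u y ^ 2) (volume : Measure ℝ))
    (h : Tendsto (fun x => u x ^ 2) atTop (𝓝 L)) : L = 0 := by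
  have hL0 : 0 ≤ L := ge_of_tendsto h (Filter.Eventually.of_forall fun x => sq_nonneg _)
  rcases eq_or_lt_of_le hL0 with h0 | hL
  · exact h0.symm
  exfalso
  have hev : ∀ᶠ x in atTop, L / 2 < u x ^ 2 := h.eventually_const_lt (half_lt_self hL)
  obtain ⟨A, hA⟩ := eventually_atTop.1 hev
  have hsub : Ici A ⊆ {a : ℝ | L / 2 ≤ u a ^ 2} := fun x hx => (hA x hx).le
  have hfin := husq.measure_ge_lt_top (half_pos hL)
  have : (volume : Measure ℝ) (Ici A) < ∞ := lt_of_le_of_lt (measure_mono hsub) hfin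
  simp [Real.volume_Ici] at this

theorem tendsto_atTop' (hu2 : MemLp u 2 (volume : Measure ℝ))
    (hdiff : Differentiable ℝ u)
    (hu2' : MemLp (deriv u) 2 (volume : Measure ℝ))
    (hnn : ∀ x, 0 ≤ u x) : Tendsto u atTop (𝓝 0) := by
  have h := tendsto_sq_atTop hu2 hdiff hu2'
  have hL := limit_zero hu2.integrable_sq h
  rw [hL] at h
  have hs : Tendsto (fun x => Real.sqrt (u x ^ 2)) atTop (𝓝 0) := by
    have := (Real.continuous_sqrt.tendsto' 0 0 (by simp)).comp h
    exact this
  refine hs.congr fun x => ?_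
  rw [Real.sqrt_sq (hnn x)]

theorem tendsto_atBot' (hu2 : MemLp u 2 (volume : Measure ℝ))
    (hdiff : Differentiable ℝ u)
    (hu2' : MemLp (deriv u) 2 (volume : Measure ℝ))
    (hnn : ∀ x, 0 ≤ u x) : Tendsto u atBot (𝓝 0) := by
  have hint := hg'int hu2 hu2'
  have key : ∀ x : ℝ, u x ^ 2 = u 0 ^ 2 - ∫ y in x..(0:ℝ), 2 * u y * deriv u y := by
    intro x
    have := intervalIntegral.integral_eq_sub_of_hasDerivAt
      (f := fun y => u y ^ 2) (fun y _ => sq_deriv hdiff y)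
      (hint.intervalIntegrable (a := x) (b := 0))
    linarith [this]
  have h2 : Tendsto (fun x : ℝ => ∫ y in x..(0:ℝ), 2 * u y * deriv u y) atBot
      (𝓝 (∫ y in Iic (0:ℝ), 2 * u y * deriv u y)) :=
    intervalIntegral_tendsto_integral_Iic 0 hint.integrableOn tendsto_id
  have h3 : Tendsto (fun x => u x ^ 2) atBot
      (𝓝 (u 0 ^ 2 - ∫ y in Iic (0:ℝ), 2 * u y * deriv u y)) := by
    have := (tendsto_const_nhds (x := u 0 ^ 2) (f := atBot)).sub h2
    exact Tendsto.congr (fun x => (key x).symm) this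
  set L := u 0 ^ 2 - ∫ y in Iic (0:ℝ), 2 * u y * deriv u y with hLdef
  have hL : L = 0 := by
    have hL0 : 0 ≤ L := ge_of_tendsto h3 (Filter.Eventually.of_forall fun x => sq_nonneg _)
    rcases eq_or_lt_of_le hL0 with h0 | hL
    · exact h0.symm
    exfalso
    have hev := h3.eventually_const_lt (half_lt_self hL)
    obtain ⟨A, hA⟩ := eventually_atBot.1 hev
    have hsub : Iic A ⊆ {a : ℝ | L / 2 ≤ u a ^ 2} := fun x hx => (hA x hx).le
    have hfin := hu2.integrable_sq.measure_ge_lt_top (half_pos hL)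
    have : (volume : Measure ℝ) (Iic A) < ∞ := lt_of_le_of_lt (measure_mono hsub) hfin
    simp [Real.volume_Iic] at this
  rw [hL] at h3
  have hs : Tendsto (fun x => Real.sqrt (u x ^ 2)) atBot (𝓝 0) := by
    have := (Real.continuous_sqrt.tendsto' 0 0 (by simp)).comp h3
    exact this
  refine hs.congr fun x => ?_
  rw [Real.sqrt_sq (hnn x)]

theorem exists_bound' (hc : Continuous u) (htop : Tendsto u atTop (𝓝 0))
    (hbot : Tendsto u atBot (𝓝 0)) :
    ∃ M : ℝ, 0 ≤ M ∧ ∀ y, u y ≤ M := by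
  obtain ⟨A, hA⟩ := eventually_atTop.1 (htop.eventually_lt_const one_pos)
  obtain ⟨B, hB⟩ := eventually_atBot.1 (hbot.eventually_lt_const one_pos)
  obtain ⟨C, hC⟩ := (isCompact_Icc (a := B) (b := A)).exists_bound_of_continuousOn
    hc.continuousOn
  refine ⟨max C 1, le_trans zero_le_one (le_max_right _ _), fun y => ?_⟩
  rcases le_or_gt y A with hyA | hyA
  · rcases le_or_gt B y with hBy | hBy
    · exact le_trans (le_trans (le_abs_self _) (hC y ⟨hBy, hyA⟩)) (le_max_left _ _)
    · exact le_trans (hB y hBy.le).le (le_max_right _ _)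
  · exact le_trans (hA y hyA.le).le (le_max_right _ _)


lemma mu_antitone : Antitone (mu u) := by
  intro s t hst
  exact measure_mono (fun y hy => lt_of_le_of_lt hst hy)

section basic

variable {M : ℝ} (hM : ∀ y, u y ≤ M) (hM0 : 0 ≤ M)

include hM hM0 in
lemma S_nonempty (x : ℝ) :
    {t : ℝ | 0 ≤ t ∧ mu u t ≤ ENNReal.ofReal x}.Nonempty := by
  refine ⟨M, hM0, ?_⟩
  have : {y : ℝ | M < u y} = ∅ := by
    ext y; simp only [mem_setOf_eq, mem_empty_iff_false, iff_false, not_lt]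
    exact hM y
  simp [mu, this]

lemma S_bddBelow (u : ℝ → ℝ) (x : ℝ) :
    BddBelow {t : ℝ | 0 ≤ t ∧ mu u t ≤ ENNReal.ofReal x} :=
  ⟨0, fun t ht => ht.1⟩

include hM hM0 in
lemma ust_nonneg (x : ℝ) : 0 ≤ ust u x :=
  le_csInf (S_nonempty hM hM0 x) (fun t ht => ht.1)

include hM hM0 in
lemma ust_le_M (x : ℝ) : ust u x ≤ M := by
  refine csInf_le (S_bddBelow u x) ⟨hM0, ?_⟩
  have : {y : ℝ | M < u y} = ∅ := by
    ext y; simp only [mem_setOf_eq, mem_empty_iff_false, iff_false, not_lt]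
    exact hM y
  simp [mu, this]

include hM hM0 in
lemma ust_antitone : Antitone (ust u) := by
  intro x y hxy
  exact csInf_le_csInf (S_bddBelow u y) (S_nonempty hM hM0 x)
    (fun t ht => ⟨ht.1, le_trans ht.2 (ENNReal.ofReal_le_ofReal hxy)⟩)

include hM hM0 in
lemma mu_ust_le (x : ℝ) : mu u (ust u x) ≤ ENNReal.ofReal x := by
  have key : ∀ τ : ℝ, ust u x < τ → mu u τ ≤ ENNReal.ofReal x := by
    intro τ hτ
    obtain ⟨t, ht, htτ⟩ := exists_lt_of_csInf_lt (S_nonempty hM hM0 x) hτ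
    exact le_trans (mu_antitone htτ.le) ht.2
  have hset : {y : ℝ | ust u x < u y} =
      ⋃ n : ℕ, {y : ℝ | ust u x + 1 / (n + 1) < u y} := by
    ext y
    simp only [mem_setOf_eq, mem_iUnion]
    constructor
    · intro hy
      obtain ⟨n, hn⟩ := exists_nat_one_div_lt (sub_pos.2 hy)
      exact ⟨n, by linarith⟩
    · rintro ⟨n, hn⟩
      have : (0:ℝ) < 1 / (n + 1) := by positivity
      linarith
  have hmono : Monotone (fun n : ℕ => {y : ℝ | ust u x + 1 / (n + 1) < u y}) := by
    intro m n hmn y hy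
    simp only [mem_setOf_eq] at hy ⊢
    have : (1:ℝ) / (n + 1) ≤ 1 / (m + 1) := by
      apply one_div_le_one_div_of_le (by positivity)
      exact_mod_cast by omega
    linarith
  have := tendsto_measure_iUnion_atTop (μ := (volume : Measure ℝ)) hmono
  rw [← hset] at this
  refine le_of_tendsto this (Filter.Eventually.of_forall fun n => ?_)
  exact key _ (lt_add_of_pos_right _ (by positivity))

lemma mu_lt_top (husq : Integrable (fun y => u y ^ 2) (volume : Measure ℝ))
    {t : ℝ} (ht : 0 < t) : mu u t < ∞ := by
  have hsub : {y : ℝ | t < u y} ⊆ {y : ℝ | t ^ 2 ≤ u y ^ 2} := by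
    intro y hy
    simp only [mem_setOf_eq] at hy ⊢
    nlinarith
  exact lt_of_le_of_lt (measure_mono hsub) (husq.measure_ge_lt_top (by positivity))

lemma meas_ge_ust (hc : Continuous u) (husq : Integrable (fun y => u y ^ 2) (volume : Measure ℝ))
    {a : ℝ} (ha : 0 < a) (h : 0 < ust u a) :
    ENNReal.ofReal a ≤ volume {y : ℝ | ust u a ≤ u y} := by
  set t := ust u a with htdef
  -- the sequence t - t/(n+2) increases to t
  set s : ℕ → ℝ := fun n => t - t / (n + 2) with hsdef
  have hs_pos : ∀ n, 0 < s n := by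
    intro n
    have h1 : t / (n + 2) < t := by
      apply div_lt_self h
      exact_mod_cast by norm_num
    simpa [hsdef] using sub_pos.2 h1
  have hs_lt : ∀ n, s n < t := by
    intro n
    have : (0:ℝ) < t / (n + 2) := by positivity
    simp only [hsdef]; linarith
  have hs_mono : Monotone s := by
    intro m n hmn
    simp only [hsdef]
    have : t / (n + 2) ≤ t / (m + 2) := by
      apply div_le_div_of_nonneg_left h.le (by positivity)
      exact_mod_cast by omega
    linarith
  have hseteq : {y : ℝ | t ≤ u y} = ⋂ n : ℕ, {y : ℝ | s n < u y} := by
    ext y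
    simp only [mem_setOf_eq, mem_iInter]
    constructor
    · intro hy n; exact lt_of_lt_of_le (hs_lt n) hy
    · intro hy
      by_contra hlt
      push_neg at hlt
      have htd : Tendsto s atTop (𝓝 t) := by
        have h1 : Tendsto (fun n : ℕ => t / (n + 2)) atTop (𝓝 0) := by
          apply Tendsto.div_atTop tendsto_const_nhds
          exact tendsto_atTop_add_const_right atTop 2 tendsto_natCast_atTop_atTop
        simpa [hsdef] using tendsto_const_nhds.sub h1
      have := le_of_tendsto htd (Filter.Eventually.of_forall fun n => (hy n).le)
      linarith
  have hanti : Antitone fun n : ℕ => {y : ℝ | s n < u y} := by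
    intro m n hmn y hy
    simp only [mem_setOf_eq] at hy ⊢
    exact lt_of_le_of_lt (hs_mono hmn) hy
  have hfin : (volume : Measure ℝ) {y : ℝ | s 0 < u y} ≠ ∞ :=
    (mu_lt_top husq (hs_pos 0)).ne
  have htends := tendsto_measure_iInter_atTop (μ := (volume : Measure ℝ))
    (fun n => (isOpen_lt continuous_const hc).measurableSet.nullMeasurableSet) hanti ⟨0, hfin⟩
  rw [← hseteq] at htends
  refine ge_of_tendsto htends (Filter.Eventually.of_forall fun n => ?_)
  -- each s n is not in the defining set, so mu u (s n) > ofReal a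
  have hnot : s n ∉ {t : ℝ | 0 ≤ t ∧ mu u t ≤ ENNReal.ofReal a} := by
    intro hmem
    have := csInf_le (S_bddBelow u a) hmem
    exact absurd this (not_le.2 (hs_lt n))
  have : ¬ (mu u (s n) ≤ ENNReal.ofReal a) := fun hle => hnot ⟨(hs_pos n).le, hle⟩
  exact (not_le.1 this).le

lemma exists_peak (hc : Continuous u) (husq : Integrable (fun y => u y ^ 2) (volume : Measure ℝ))
    {a : ℝ} (ha : 0 < a) (h : 0 < ust u a) : ∃ p, ust u a ≤ u p := by
  have h1 := meas_ge_ust hc husq ha h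
  have h2 : (volume : Measure ℝ) {y : ℝ | ust u a ≤ u y} ≠ 0 := by
    intro h0
    rw [h0] at h1
    simp only [nonpos_iff_eq_zero, ENNReal.ofReal_eq_zero] at h1
    linarith
  obtain ⟨p, hp⟩ := nonempty_of_measure_ne_zero h2
  exact ⟨p, hp⟩

include hM hM0 in
lemma volume_E_le (husq : Integrable (fun y => u y ^ 2) (volume : Measure ℝ))
    (hc : Continuous u) {a b : ℝ} (ha : 0 < a) (hab : a < b)
    (h : ust u b < ust u a) :
    volume (E u (ust u b) (ust u a)) ≤ ENNReal.ofReal (b - a) := by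
  set s := ust u b
  set t := ust u a
  have ht0 : 0 < t := lt_of_le_of_lt (ust_nonneg hM hM0 b) h
  have hEm : MeasurableSet (E u s t) := by
    have : IsOpen (E u s t) := by
      have : E u s t = u ⁻¹' (Ioo s t) := rfl
      rw [this]; exact isOpen_Ioo.preimage hc
    exact this.measurableSet
  have hgem : MeasurableSet {y : ℝ | t ≤ u y} := by
    have : {y : ℝ | t ≤ u y} = u ⁻¹' (Ici t) := rfl
    rw [this]; exact (isClosed_Ici.preimage hc).measurableSet
  have hdisj : Disjoint (E u s t) {y : ℝ | t ≤ u y} := by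
    rw [Set.disjoint_left]
    intro y hy hy'
    exact absurd hy.2 (not_lt.2 hy')
  have hsub : E u s t ∪ {y : ℝ | t ≤ u y} ⊆ {y : ℝ | s < u y} := by
    rintro y (hy | hy)
    · exact hy.1
    · exact lt_of_lt_of_le h hy
  have hunion : volume (E u s t) + volume {y : ℝ | t ≤ u y} ≤ ENNReal.ofReal b := by
    rw [← measure_union hdisj hgem]
    exact le_trans (measure_mono hsub) (mu_ust_le hM hM0 b)
  have hge := meas_ge_ust hc husq ha ht0
  have : volume (E u s t) + ENNReal.ofReal a ≤ ENNReal.ofReal b :=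
    le_trans (add_le_add_right hge _) hunion
  have h2 : volume (E u s t) ≤ ENNReal.ofReal b - ENNReal.ofReal a :=
    ENNReal.le_sub_of_add_le_right ENNReal.ofReal_ne_top this
  rwa [← ENNReal.ofReal_sub _ ha.le] at h2

end basic


lemma integrableOn_deriv (hu2' : MemLp (deriv u) 2 (volume : Measure ℝ))
    {S : Set ℝ} (hfin : volume S < ∞) :
    IntegrableOn (deriv u) S volume := by
  refine Integrable.mono' (g := fun y => deriv u y ^ 2 + 1) ?_ ?_ ?_
  · exact (hu2'.integrable_sq.integrableOn).add
      (integrableOn_const hfin.ne)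
  · exact hu2'.aestronglyMeasurable.restrict
  · refine Filter.Eventually.of_forall fun y => ?_
    have : |deriv u y| ≤ deriv u y ^ 2 + 1 := by
      nlinarith [sq_nonneg (|deriv u y| - 1), sq_abs (deriv u y), abs_nonneg (deriv u y)]
    simpa [Real.norm_eq_abs] using this

theorem crossing (hc : Continuous u) (hdiff : Differentiable ℝ u)
    (hu2' : MemLp (deriv u) 2 (volume : Measure ℝ))
    (htop : Tendsto u atTop (𝓝 0)) (hbot : Tendsto u atBot (𝓝 0))
    {s t : ℝ} (hs : 0 < s) (hst : s < t) (hpeak : ∃ p, t ≤ u p)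
    (hInt : IntegrableOn (fun y => |deriv u y|) (E u s t) volume) :
    2 * (t - s) ≤ ∫ y in E u s t, |deriv u y| := by
  obtain ⟨p, hp⟩ := hpeak
  have hio : ∀ a b : ℝ, IntegrableOn (deriv u) (Ioo a b) volume := fun a b =>
    integrableOn_deriv hu2' (by rw [Real.volume_Ioo]; exact ENNReal.ofReal_lt_top)
  have hii : ∀ a b : ℝ, IntervalIntegrable (deriv u) volume a b := by
    intro a b
    rw [intervalIntegrable_iff]
    exact (integrableOn_deriv hu2'
      (by rw [Set.uIoc, Real.volume_Ioc]; exact ENNReal.ofReal_lt_top))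
  -- left crossing
  obtain ⟨b0, hb0⟩ := eventually_atBot.1 (hbot.eventually_lt_const hs)
  set q : ℝ := min b0 (p - 1) with hqdef
  have hqp : q < p := lt_of_le_of_lt (min_le_right _ _) (by linarith)
  have huq : u q < s := hb0 q (min_le_left _ _)
  set A : Set ℝ := Icc q p ∩ u ⁻¹' (Iic s) with hAdef
  have hAcomp : IsCompact A := isCompact_Icc.inter_right (isClosed_Iic.preimage hc)
  have hAne : A.Nonempty := ⟨q, ⟨le_refl _, hqp.le⟩, huq.le⟩
  set q' : ℝ := sSup A with hq'def
  have hq'A : q' ∈ A := hAcomp.sSup_mem hAne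
  have huq' : u q' ≤ s := hq'A.2
  have hq'p : q' < p := lt_of_le_of_ne hq'A.1.2 (fun h => by
    rw [h] at huq'; linarith)
  set B : Set ℝ := Icc q' p ∩ u ⁻¹' (Ici t) with hBdef
  have hBcomp : IsCompact B := isCompact_Icc.inter_right (isClosed_Ici.preimage hc)
  have hBne : B.Nonempty := ⟨p, ⟨hq'p.le, le_refl _⟩, hp⟩
  set p' : ℝ := sInf B with hp'def
  have hp'B : p' ∈ B := hBcomp.sInf_mem hBne
  have hup' : t ≤ u p' := hp'B.2
  have hq'p' : q' < p' := lt_of_le_of_ne hp'B.1.1 (fun h => by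
    rw [← h] at hup'; linarith)
  have hsub1 : Ioo q' p' ⊆ E u s t := by
    intro y hy
    constructor
    · by_contra hys
      push_neg at hys
      have hyA : y ∈ A := ⟨⟨le_trans hq'A.1.1 hy.1.le, le_trans hy.2.le hp'B.1.2⟩, hys⟩
      exact absurd (le_csSup hAcomp.bddAbove hyA) (not_le.2 hy.1)
    · by_contra hyt
      push_neg at hyt
      have hyB : y ∈ B := ⟨⟨hy.1.le, le_trans hy.2.le hp'B.1.2⟩, hyt⟩
      exact absurd (csInf_le hBcomp.bddBelow hyB) (not_le.2 hy.2)
  have est1 : t - s ≤ ∫ y in Ioo q' p', |deriv u y| := by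
    have hft := intervalIntegral.integral_eq_sub_of_hasDerivAt (a := q') (b := p')
      (fun y _ => (hdiff y).hasDerivAt) (hii q' p')
    have h1 : ∫ y in Ioo q' p', deriv u y = u p' - u q' := by
      rw [← MeasureTheory.integral_Ioc_eq_integral_Ioo,
        ← intervalIntegral.integral_of_le hq'p'.le, hft]
    have h2 : ∫ y in Ioo q' p', deriv u y ≤ ∫ y in Ioo q' p', |deriv u y| :=
      integral_mono (hio q' p') (hio q' p').abs (fun y => le_abs_self _)
    rw [h1] at h2
    linarith
  -- right crossing
  obtain ⟨b1, hb1⟩ := eventually_atTop.1 (htop.eventually_lt_const hs)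
  set r : ℝ := max b1 (p + 1) with hrdef
  have hpr : p < r := lt_of_lt_of_le (by linarith) (le_max_right _ _)
  have hur : u r < s := hb1 r (le_max_left _ _)
  set C : Set ℝ := Icc p r ∩ u ⁻¹' (Iic s) with hCdef
  have hCcomp : IsCompact C := isCompact_Icc.inter_right (isClosed_Iic.preimage hc)
  have hCne : C.Nonempty := ⟨r, ⟨hpr.le, le_refl _⟩, hur.le⟩
  set r' : ℝ := sInf C with hr'def
  have hr'C : r' ∈ C := hCcomp.sInf_mem hCne
  have hur' : u r' ≤ s := hr'C.2
  have hpr' : p < r' := lt_of_le_of_ne hr'C.1.1 (fun h => by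
    rw [← h] at hur'; linarith)
  set D : Set ℝ := Icc p r' ∩ u ⁻¹' (Ici t) with hDdef
  have hDcomp : IsCompact D := isCompact_Icc.inter_right (isClosed_Ici.preimage hc)
  have hDne : D.Nonempty := ⟨p, ⟨le_refl _, hpr'.le⟩, hp⟩
  set p'' : ℝ := sSup D with hp''def
  have hp''D : p'' ∈ D := hDcomp.sSup_mem hDne
  have hup'' : t ≤ u p'' := hp''D.2
  have hp''r' : p'' < r' := lt_of_le_of_ne hp''D.1.2 (fun h => by
    rw [h] at hup''; linarith)
  have hsub2 : Ioo p'' r' ⊆ E u s t := by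
    intro y hy
    constructor
    · by_contra hys
      push_neg at hys
      have hyC : y ∈ C := ⟨⟨le_trans hp''D.1.1 hy.1.le, le_trans hy.2.le hr'C.1.2⟩, hys⟩
      exact absurd (csInf_le hCcomp.bddBelow hyC) (not_le.2 hy.2)
    · by_contra hyt
      push_neg at hyt
      have hyD : y ∈ D := ⟨⟨le_trans hp''D.1.1 hy.1.le, hy.2.le⟩, hyt⟩
      exact absurd (le_csSup hDcomp.bddAbove hyD) (not_le.2 hy.1)
  have est2 : t - s ≤ ∫ y in Ioo p'' r', |deriv u y| := by
    have hft := intervalIntegral.integral_eq_sub_of_hasDerivAt (a := p'') (b := r')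
      (fun y _ => (hdiff y).hasDerivAt) (hii p'' r')
    have h1 : ∫ y in Ioo p'' r', deriv u y = u r' - u p'' := by
      rw [← MeasureTheory.integral_Ioc_eq_integral_Ioo,
        ← intervalIntegral.integral_of_le hp''r'.le, hft]
    have h2 : ∫ y in Ioo p'' r', -deriv u y ≤ ∫ y in Ioo p'' r', |deriv u y| :=
      integral_mono (hio p'' r').neg (hio p'' r').abs (fun y => neg_le_abs _)
    rw [integral_neg, h1] at h2
    linarith
  -- combine
  have hp'p'' : p' ≤ p'' := le_trans hp'B.1.2 hp''D.1.1
  have hdisj : Disjoint (Ioo q' p') (Ioo p'' r') := by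
    rw [Set.disjoint_left]
    intro y hy1 hy2
    have := hy1.2
    have := hy2.1
    linarith
  have hunion : ∫ y in Ioo q' p' ∪ Ioo p'' r', |deriv u y| =
      (∫ y in Ioo q' p', |deriv u y|) + ∫ y in Ioo p'' r', |deriv u y| :=
    setIntegral_union hdisj measurableSet_Ioo (hio q' p').abs (hio p'' r').abs
  have hsubE : Ioo q' p' ∪ Ioo p'' r' ⊆ E u s t := union_subset hsub1 hsub2
  have hfinal : ∫ y in Ioo q' p' ∪ Ioo p'' r', |deriv u y| ≤ ∫ y in E u s t, |deriv u y| := by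
    refine setIntegral_mono_set hInt ?_ (HasSubset.Subset.eventuallyLE hsubE)
    exact Filter.Eventually.of_forall fun y => abs_nonneg _
  rw [hunion] at hfinal
  linarith


lemma E_measurable (hc : Continuous u) (s t : ℝ) : MeasurableSet (E u s t) := by
  have : E u s t = u ⁻¹' (Ioo s t) := rfl
  rw [this]; exact (isOpen_Ioo.preimage hc).measurableSet

theorem two_point (hc : Continuous u) (hdiff : Differentiable ℝ u)
    (hu2' : MemLp (deriv u) 2 (volume : Measure ℝ))
    (husq : Integrable (fun y => u y ^ 2) (volume : Measure ℝ))
    (htop : Tendsto u atTop (𝓝 0)) (hbot : Tendsto u atBot (𝓝 0))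
    {M : ℝ} (hM : ∀ y, u y ≤ M) (hM0 : 0 ≤ M)
    {a b : ℝ} (ha : 0 < a) (hab : a < b) :
    (ust u a - ust u b) ^ 2 ≤
      (b - a) / 4 * ∫ y in E u (ust u b) (ust u a), deriv u y ^ 2 := by
  set s := ust u b with hsdef
  set t := ust u a with htdef
  have hst : s ≤ t := ust_antitone hM hM0 hab.le
  have hX0 : 0 ≤ ∫ y in E u s t, deriv u y ^ 2 :=
    setIntegral_nonneg (E_measurable hc s t) (fun y _ => sq_nonneg _)
  have hs0 : 0 ≤ s := by rw [hsdef]; exact ust_nonneg hM hM0 b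
  rcases eq_or_lt_of_le hst with heq | hlt
  · have hts : t - s = 0 := by rw [heq]; ring
    rw [hts, zero_pow (by norm_num)]
    exact mul_nonneg (by linarith) hX0
  -- now s < t
  have ht0 : 0 < t := lt_of_le_of_lt (ust_nonneg hM hM0 b) hlt
  have hvolE : volume (E u s t) ≤ ENNReal.ofReal (b - a) := volume_E_le hM hM0 husq hc ha hab hlt
  have hvolE' : volume (E u s t) < ∞ := lt_of_le_of_lt hvolE ENNReal.ofReal_lt_top
  have hInt : IntegrableOn (fun y => |deriv u y|) (E u s t) volume := by
    have := (integrableOn_deriv hu2' (S := E u s t) hvolE').abs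
    exact this
  have hpeak : ∃ p, t ≤ u p := exists_peak hc husq ha ht0
  -- crossing estimate with epsilon
  have hcross : 2 * (t - s) ≤ ∫ y in E u s t, |deriv u y| := by
    by_contra hcon
    push_neg at hcon
    set I := ∫ y in E u s t, |deriv u y| with hIdef
    have hI0 : 0 ≤ I :=
      setIntegral_nonneg (E_measurable hc s t) (fun y _ => abs_nonneg _)
    set ε : ℝ := (2 * (t - s) - I) / 2 with hεdef
    have hε : 0 < ε := by simp only [hεdef]; linarith
    rcases lt_or_ge (s + ε / 2) t with hcase | hcase
    · have hs' : 0 < s + ε / 2 := by linarith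
      have hc2 := crossing hc hdiff hu2' htop hbot hs' hcase hpeak
        ((hInt.mono_set (fun y hy => ⟨lt_of_le_of_lt (by linarith) hy.1, hy.2⟩)))
      have hmono : ∫ y in E u (s + ε / 2) t, |deriv u y| ≤ I := by
        refine setIntegral_mono_set hInt
          (Filter.Eventually.of_forall fun y => abs_nonneg _)
          (HasSubset.Subset.eventuallyLE ?_)
        intro y hy
        exact ⟨lt_of_le_of_lt (by linarith) hy.1, hy.2⟩
      simp only [hεdef] at hc2 hmono
      linarith
    · simp only [hεdef] at hcase
      linarith
  -- Cauchy-Schwarz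
  haveI hfm : IsFiniteMeasure (volume.restrict (E u s t)) := by
    constructor
    rwa [Measure.restrict_apply_univ]
  have hconj : Real.HolderConjugate 2 2 := Real.HolderConjugate.two_two
  have h2e : (ENNReal.ofReal 2) = (2 : ℝ≥0∞) := by
    rw [ENNReal.ofReal_ofNat]
  have hmemd : MemLp (fun y => |deriv u y|) (ENNReal.ofReal 2) (volume.restrict (E u s t)) := by
    rw [h2e]
    exact (hu2'.restrict (E u s t)).abs
  have hmem1 : MemLp (fun _ : ℝ => (1:ℝ)) (ENNReal.ofReal 2) (volume.restrict (E u s t)) := by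
    rw [h2e]
    exact memLp_const 1
  have hCS := integral_mul_le_Lp_mul_Lq_of_nonneg hconj
    (f := fun y => |deriv u y|) (g := fun _ => (1:ℝ))
    (μ := volume.restrict (E u s t))
    (Filter.Eventually.of_forall fun y => abs_nonneg _)
    (Filter.Eventually.of_forall fun y => zero_le_one)
    hmemd hmem1
  simp only [mul_one, one_pow] at hCS
  -- clean up the rpow expressions
  have habs : (∫ y in E u s t, |deriv u y| ^ (2:ℝ)) = ∫ y in E u s t, deriv u y ^ 2 := by
    refine integral_congr_ae (Filter.Eventually.of_forall fun y => ?_)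
    have h2 : |deriv u y| ^ (2:ℝ) = |deriv u y| ^ (2:ℕ) := by
      rw [← Real.rpow_natCast]; norm_num
    simp only [h2, sq_abs]
  have hone : (∫ y in E u s t, (1:ℝ) ^ (2:ℝ)) = (volume (E u s t)).toReal := by
    simp [Real.one_rpow, measureReal_def]
  rw [habs] at hCS
  rw [hone] at hCS
  set X := ∫ y in E u s t, deriv u y ^ 2 with hXdef
  set V := (volume (E u s t)).toReal with hVdef
  have hV0 : 0 ≤ V := ENNReal.toReal_nonneg
  have hVle : V ≤ b - a := by
    rw [hVdef]
    exact ENNReal.toReal_le_of_le_ofReal (by linarith) hvolE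
  -- square both sides
  have hsq : (2 * (t - s)) * (2 * (t - s)) ≤ (X ^ ((1:ℝ)/2) * V ^ ((1:ℝ)/2)) *
      (X ^ ((1:ℝ)/2) * V ^ ((1:ℝ)/2)) := by
    have h1 : 0 ≤ 2 * (t - s) := by linarith
    exact mul_self_le_mul_self h1 (le_trans hcross hCS)
  have hXV : (X ^ ((1:ℝ)/2) * V ^ ((1:ℝ)/2)) * (X ^ ((1:ℝ)/2) * V ^ ((1:ℝ)/2)) = X * V := by
    have h1 : X ^ ((1:ℝ)/2) * X ^ ((1:ℝ)/2) = X := by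
      rw [← Real.rpow_add_of_nonneg hX0 (by norm_num) (by norm_num)]
      norm_num
    have h2 : V ^ ((1:ℝ)/2) * V ^ ((1:ℝ)/2) = V := by
      rw [← Real.rpow_add_of_nonneg hV0 (by norm_num) (by norm_num)]
      norm_num
    calc (X ^ ((1:ℝ)/2) * V ^ ((1:ℝ)/2)) * (X ^ ((1:ℝ)/2) * V ^ ((1:ℝ)/2))
        = (X ^ ((1:ℝ)/2) * X ^ ((1:ℝ)/2)) * (V ^ ((1:ℝ)/2) * V ^ ((1:ℝ)/2)) := by ring
      _ = X * V := by rw [h1, h2]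
  rw [hXV] at hsq
  have hfin : X * V ≤ X * (b - a) := mul_le_mul_of_nonneg_left hVle hX0
  nlinarith


section main

variable (hc : Continuous u) (hdiff : Differentiable ℝ u)
  (hu2' : MemLp (deriv u) 2 (volume : Measure ℝ))
  (husq : Integrable (fun y => u y ^ 2) (volume : Measure ℝ))
  (husq' : Integrable (fun y => deriv u y ^ 2) (volume : Measure ℝ))
  (htop : Tendsto u atTop (𝓝 0)) (hbot : Tendsto u atBot (𝓝 0))
  {M : ℝ} (hM : ∀ y, u y ≤ M) (hM0 : 0 ≤ M)

include hc in
lemma Aset_meas (x : ℝ) : MeasurableSet {y : ℝ | ust u x < u y} :=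
  (isOpen_lt continuous_const hc).measurableSet

include hc husq' hM hM0 in
lemma G_mono : Monotone (G u) := by
  intro x y hxy
  refine setIntegral_mono_set husq'.integrableOn
    (Filter.Eventually.of_forall fun z => sq_nonneg _)
    (HasSubset.Subset.eventuallyLE ?_)
  intro z hz
  exact lt_of_le_of_lt (ust_antitone hM hM0 hxy) hz

include hc husq' in
lemma G_nonneg (x : ℝ) : 0 ≤ G u x :=
  setIntegral_nonneg (Aset_meas hc x) (fun y _ => sq_nonneg _)

include hc husq' in
lemma G_le (x : ℝ) : G u x ≤ ∫ y, deriv u y ^ 2 :=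
  setIntegral_le_integral husq' (Filter.Eventually.of_forall fun y => sq_nonneg _)

include hc hdiff hu2' husq husq' htop hbot hM hM0 in
lemma key2 {a b : ℝ} (ha : 0 < a) (hab : a < b) :
    (ust u a - ust u b) ^ 2 ≤ (b - a) / 4 * (G u b - G u a) := by
  refine le_trans (two_point hc hdiff hu2' husq htop hbot hM hM0 ha hab) ?_
  have hsub : {y : ℝ | ust u a < u y} ⊆ {y : ℝ | ust u b < u y} := fun z hz =>
    lt_of_le_of_lt (ust_antitone hM hM0 hab.le) hz
  have hsplit : G u b = G u a +
      ∫ y in {y : ℝ | ust u b < u y} \ {y : ℝ | ust u a < u y}, deriv u y ^ 2 := by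
    rw [G, G, ← setIntegral_union disjoint_sdiff_right
      ((Aset_meas hc b).diff (Aset_meas hc a)) husq'.integrableOn husq'.integrableOn,
      union_diff_cancel hsub]
  have hE : ∫ y in E u (ust u b) (ust u a), deriv u y ^ 2 ≤
      ∫ y in {y : ℝ | ust u b < u y} \ {y : ℝ | ust u a < u y}, deriv u y ^ 2 := by
    refine setIntegral_mono_set husq'.integrableOn
      (Filter.Eventually.of_forall fun z => sq_nonneg _)
      (HasSubset.Subset.eventuallyLE ?_)
    rintro z ⟨hz1, hz2⟩
    exact ⟨hz1, fun hz3 => absurd hz2 (not_lt.2 hz3.le)⟩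
  have h4 : (0:ℝ) ≤ (b - a) / 4 := by linarith
  nlinarith [hsplit, hE]

include hc hdiff hu2' husq husq' htop hbot hM hM0 in
theorem final :
    (∫ x in Ioi (0:ℝ), (deriv (ust u) x) ^ 2) ≤ ∫ x : ℝ, (deriv u x) ^ 2 := by
  set T := ∫ x : ℝ, (deriv u x) ^ 2 with hTdef
  have hT0 : 0 ≤ T := integral_nonneg fun x => sq_nonneg _
  have hGmono : Monotone (G u) := G_mono hc husq' hM hM0
  have hh : Monotone (fun x => -ust u x) := fun a b hab => neg_le_neg (ust_antitone hM hM0 hab)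
  set dG : ℝ → ℝ := fun x => (Measure.rnDeriv hGmono.stieltjesFunction.measure volume x).toReal
    with hdGdef
  have aeG : ∀ᵐ x : ℝ, HasDerivAt (G u) (dG x) x := hGmono.ae_hasDerivAt
  have aeD := hh.ae_hasDerivAt
  -- pointwise a.e. bound on Ioi 0
  have main_ae : ∀ᵐ x : ℝ, x ∈ Ioi (0:ℝ) → (deriv (ust u) x) ^ 2 ≤ 1/4 * dG x := by
    filter_upwards [aeG, aeD] with x hGx hDx hx0
    have hder : HasDerivAt (ust u)
        (-(Measure.rnDeriv hh.stieltjesFunction.measure volume x).toReal) x := by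
      have := hDx.neg
      simpa [Pi.neg_def] using this
    set c : ℝ := (Measure.rnDeriv hh.stieltjesFunction.measure volume x).toReal
    have hderiv_eq : deriv (ust u) x = -c := hder.deriv
    rw [hderiv_eq, neg_sq]
    -- slope argument
    have hslope1 : Tendsto (fun y => ((ust u x - ust u y) / (y - x)) ^ 2) (𝓝[>] x)
        (𝓝 (c ^ 2)) := by
      have h1 : Tendsto (slope (fun z => -ust u z) x) (𝓝[≠] x) (𝓝 c) :=
        hasDerivAt_iff_tendsto_slope.1 hDx
      have h2 : Tendsto (slope (fun z => -ust u z) x) (𝓝[>] x) (𝓝 c) :=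
        h1.mono_left (nhdsWithin_mono x (fun y hy => ne_of_gt hy))
      have h3 := h2.pow 2
      refine h3.congr fun y => ?_
      rw [slope_def_field]
      ring
    have hslope2 : Tendsto (fun y => 1/4 * ((G u y - G u x) / (y - x))) (𝓝[>] x)
        (𝓝 (1/4 * dG x)) := by
      have h1 : Tendsto (slope (G u) x) (𝓝[≠] x) (𝓝 (dG x)) :=
        hasDerivAt_iff_tendsto_slope.1 hGx
      have h2 : Tendsto (slope (G u) x) (𝓝[>] x) (𝓝 (dG x)) :=
        h1.mono_left (nhdsWithin_mono x (fun y hy => ne_of_gt hy))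
      have h3 := h2.const_mul (1/4 : ℝ)
      refine h3.congr fun y => ?_
      rw [slope_def_field]
    have hev : ∀ᶠ y in 𝓝[>] x, ((ust u x - ust u y) / (y - x)) ^ 2 ≤
        1/4 * ((G u y - G u x) / (y - x)) := by
      filter_upwards [self_mem_nhdsWithin] with y hy
      have hxy : x < y := hy
      have hyx : (0:ℝ) < y - x := by linarith
      have hkey := key2 hc hdiff hu2' husq husq' htop hbot hM hM0 (a := x) (b := y) hx0 hxy
      have hstep : ((ust u x - ust u y) / (y - x)) ^ 2 =
          (ust u x - ust u y) ^ 2 / (y - x) ^ 2 := by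
        rw [div_pow]
      rw [hstep]
      rw [div_le_iff₀ (by positivity)]
      have hrhs : 1/4 * ((G u y - G u x) / (y - x)) * (y - x) ^ 2 =
          (y - x) / 4 * (G u y - G u x) := by
        field_simp
      rw [hrhs]
      exact hkey
    exact le_of_tendsto_of_tendsto hslope1 hslope2 hev
  -- the Stieltjes measure of G is finite
  set μG := hGmono.stieltjesFunction.measure with hμGdef
  have hsf_le : ∀ x : ℝ, hGmono.stieltjesFunction x ≤ T := by
    intro x
    rw [hGmono.stieltjesFunction_eq]
    exact le_trans (hGmono.rightLim_le (lt_add_one x)) (G_le hc husq' _)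
  have hsf_ge : ∀ x : ℝ, 0 ≤ hGmono.stieltjesFunction x := by
    intro x
    rw [hGmono.stieltjesFunction_eq]
    exact le_trans (G_nonneg hc husq' x) (hGmono.le_rightLim le_rfl)
  have hIoc : ∀ a b : ℝ, μG (Ioc a b) ≤ ENNReal.ofReal T := by
    intro a b
    rw [hμGdef, StieltjesFunction.measure_Ioc]
    exact ENNReal.ofReal_le_ofReal (by linarith [hsf_le b, hsf_ge a])
  have huniv : μG univ ≤ ENNReal.ofReal T := by
    have hun : ⋃ n : ℕ, Ioc (-(n:ℝ)) n = univ := by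
      ext x
      simp only [mem_iUnion, mem_Ioc, mem_univ, iff_true]
      obtain ⟨n, hn⟩ := exists_nat_ge |x|
      have h1 := abs_le.1 hn
      exact ⟨n + 1, by push_cast; linarith, by push_cast; linarith⟩
    have hmono : Monotone fun n : ℕ => Ioc (-(n:ℝ)) (n:ℝ) := by
      intro m n hmn
      apply Ioc_subset_Ioc
      · exact neg_le_neg (by exact_mod_cast hmn)
      · exact_mod_cast hmn
    have htd := tendsto_measure_iUnion_atTop (μ := μG) hmono
    rw [hun] at htd
    exact le_of_tendsto htd (Filter.Eventually.of_forall fun n => hIoc _ _)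
  haveI : IsFiniteMeasure μG :=
    ⟨lt_of_le_of_lt huniv ENNReal.ofReal_lt_top⟩
  have hdint : Integrable dG volume := Measure.integrable_toReal_rnDeriv
  calc ∫ x in Ioi (0:ℝ), (deriv (ust u) x) ^ 2
      ≤ ∫ x in Ioi (0:ℝ), 1/4 * dG x := by
        refine integral_mono_of_nonneg
          (Filter.Eventually.of_forall fun x => sq_nonneg _)
          ((hdint.integrableOn).const_mul _) ?_
        exact (ae_restrict_iff' measurableSet_Ioi).2 main_ae
    _ = 1/4 * ∫ x in Ioi (0:ℝ), dG x := by rw [integral_const_mul]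
    _ ≤ 1/4 * (μG (Ioi 0)).toReal := by
        have := Measure.setIntegral_toReal_rnDeriv_le (μ := μG) (ν := volume)
          (s := Ioi (0:ℝ)) (measure_ne_top μG _)
        rw [measureReal_def] at this
        linarith
    _ ≤ 1/4 * T := by
        have h1 : μG (Ioi 0) ≤ ENNReal.ofReal T := le_trans (measure_mono (subset_univ _)) huniv
        have h2 : (μG (Ioi 0)).toReal ≤ T := ENNReal.toReal_le_of_le_ofReal hT0 h1
        linarith
    _ ≤ T := by linarith

end main

end PolyaSzegoAux

open PolyaSzegoAux in
/-- Pólya–Szegő inequality on the line: for nonnegative `u ∈ H¹(ℝ)`, the decreasing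
rearrangement `u*` onto `ℝ⁺` satisfies `∫_{ℝ⁺} |(u*)'|² ≤ ∫_ℝ |u'|²`. -/
theorem stmt_14 (u : ℝ → ℝ)
    (hu2 : MemLp u 2 (volume : Measure ℝ))
    (hdiff : Differentiable ℝ u)
    (hu2' : MemLp (deriv u) 2 (volume : Measure ℝ))
    (hnn : ∀ x, 0 ≤ u x) :
    let ustar : ℝ → ℝ := fun x =>
      sInf {t : ℝ | 0 ≤ t ∧ volume {y : ℝ | t < u y} ≤ ENNReal.ofReal x}
    (∫ x in Ioi (0:ℝ), (deriv ustar x) ^ 2) ≤ ∫ x : ℝ, (deriv u x) ^ 2 := by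
  intro ustar
  show (∫ x in Ioi (0:ℝ), (deriv (ust u) x) ^ 2) ≤ ∫ x : ℝ, (deriv u x) ^ 2
  have hc : Continuous u := hdiff.continuous
  have htop : Tendsto u atTop (𝓝 0) := tendsto_atTop' hu2 hdiff hu2' hnn
  have hbot : Tendsto u atBot (𝓝 0) := tendsto_atBot' hu2 hdiff hu2' hnn
  obtain ⟨M, hM0, hM⟩ := exists_bound' hc htop hbot
  exact final hc hdiff hu2' hu2.integrable_sq hu2'.integrable_sq htop hbot hM hM0
end

section
/- (Boundedness of minimizing sequences via a modified Gagliardo–Nirenberg inequality) Suppose 0 < μ ≤ μ_ℝ, C > 0, and α > 0. Let (u_n) be a sequence with ‖u_n‖₂² = μ for all n, such that for each n there exists θ_n ∈ [0, μ] with ‖u_n‖₆⁶ ≤ K_ℝ (μ − θ_n)² ‖u_n'‖₂² + C θ_n^{1/2}, and suppose 6E(u_n) = 3‖u_n'‖₂² − ‖u_n‖₆⁶ ≤ −6α for all n. Then θ_n^{1/2} ≥ 6α/C for all n, and ‖u_n'‖₂ is bounded uniformly in n. -/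
open MeasureTheory Set Filter

/-- The best constant in the one-dimensional Gagliardo–Nirenberg inequality
`‖u‖₆⁶ ≤ K_ℝ ‖u‖₂⁴ ‖u'‖₂²` on `H¹(ℝ)`. -/
noncomputable def KR : ℝ :=
  sSup {r : ℝ | ∃ u : ℝ → ℝ, MemLp u 2 (volume : Measure ℝ) ∧ Differentiable ℝ u ∧
    MemLp (deriv u) 2 (volume : Measure ℝ) ∧ u ≠ 0 ∧
    r = (∫ x : ℝ, |u x| ^ 6) / ((∫ x : ℝ, (u x) ^ 2) ^ 2 * ∫ x : ℝ, (deriv u x) ^ 2)}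

/-- The critical mass `μ_ℝ = √(3/K_ℝ)`. -/
noncomputable def muR : ℝ := Real.sqrt (3 / KR)

/-- Boundedness of minimizing sequences via the modified Gagliardo–Nirenberg inequality:
if each `uₙ` has mass `μ ≤ μ_ℝ`, satisfies the modified inequality with parameter
`θₙ ∈ [0, μ]`, and `6E(uₙ) ≤ -6α`, then `√θₙ ≥ 6α/C` and `‖uₙ'‖₂` is bounded. -/
theorem stmt_18 (μ C α : ℝ) (hμ : 0 < μ) (hμR : μ ≤ muR) (hC : 0 < C) (hα : 0 < α)
    (u : ℕ → ℝ → ℝ) (θ : ℕ → ℝ)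
    (hmass : ∀ n, (∫ x : ℝ, (u n x) ^ 2) = μ)
    (hθ : ∀ n, θ n ∈ Icc (0:ℝ) μ)
    (hGN : ∀ n, (∫ x : ℝ, |u n x| ^ 6)
        ≤ KR * (μ - θ n) ^ 2 * (∫ x : ℝ, (deriv (u n) x) ^ 2) + C * Real.sqrt (θ n))
    (hE : ∀ n, 3 * (∫ x : ℝ, (deriv (u n) x) ^ 2) - (∫ x : ℝ, |u n x| ^ 6) ≤ -6 * α) :
    (∀ n, 6 * α / C ≤ Real.sqrt (θ n)) ∧
    ∃ B : ℝ, ∀ n, Real.sqrt (∫ x : ℝ, (deriv (u n) x) ^ 2) ≤ B := by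
  have hInonneg : ∀ n, 0 ≤ (∫ x : ℝ, (deriv (u n) x) ^ 2) := fun n =>
    integral_nonneg fun x => sq_nonneg _
  have hkey : ∀ n, (3 - KR * (μ - θ n) ^ 2) * (∫ x : ℝ, (deriv (u n) x) ^ 2)
      ≤ C * Real.sqrt (θ n) - 6 * α := by
    intro n
    nlinarith [hGN n, hE n]
  have hKμ : (0 ≤ KR ∧ KR * μ ^ 2 ≤ 3) ∨ KR ≤ 0 := by
    rcases le_or_gt KR 0 with hK | hK
    · exact Or.inr hK
    · left
      refine ⟨hK.le, ?_⟩
      have hs : Real.sqrt (3 / KR) ^ 2 = 3 / KR :=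
        Real.sq_sqrt (by positivity)
      have hμR' : μ ≤ Real.sqrt (3 / KR) := hμR
      have hμ2 : μ ^ 2 ≤ 3 / KR := by
        rw [← hs]; exact pow_le_pow_left₀ hμ.le hμR' 2
      rw [le_div_iff₀ hK] at hμ2
      linarith
  have hcoef : ∀ n, 0 ≤ 3 - KR * (μ - θ n) ^ 2 := by
    intro n
    have h1 : 0 ≤ μ - θ n := sub_nonneg.2 (hθ n).2
    have h2 : (μ - θ n) ^ 2 ≤ μ ^ 2 := by nlinarith [(hθ n).1]
    rcases hKμ with ⟨hK0, hK⟩ | hK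
    · nlinarith [mul_le_mul_of_nonneg_left h2 hK0]
    · nlinarith [sq_nonneg (μ - θ n)]
  have hpart1 : ∀ n, 6 * α / C ≤ Real.sqrt (θ n) := by
    intro n
    have h0 : 0 ≤ (3 - KR * (μ - θ n) ^ 2) * (∫ x : ℝ, (deriv (u n) x) ^ 2) :=
      mul_nonneg (hcoef n) (hInonneg n)
    rw [div_le_iff₀ hC]
    nlinarith [hkey n]
  refine ⟨hpart1, ?_⟩
  set θ₀ : ℝ := (6 * α / C) ^ 2 with hθ₀def
  have hθ₀pos : 0 < θ₀ := pow_pos (div_pos (by linarith) hC) 2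
  have hθ₀le : ∀ n, θ₀ ≤ θ n := by
    intro n
    have h := hpart1 n
    have h2 : θ₀ ≤ Real.sqrt (θ n) ^ 2 := by
      apply pow_le_pow_left₀ (by positivity) h
    rwa [Real.sq_sqrt (hθ n).1] at h2
  obtain ⟨δ, hδ, hδle⟩ : ∃ δ : ℝ, 0 < δ ∧ ∀ n, δ ≤ 3 - KR * (μ - θ n) ^ 2 := by
    rcases le_or_gt KR 0 with hK | hK
    · exact ⟨3, by norm_num, fun n => by nlinarith [sq_nonneg (μ - θ n)]⟩
    · refine ⟨3 - KR * (μ - θ₀) ^ 2, ?_, ?_⟩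
      · have hK3 : KR * μ ^ 2 ≤ 3 := (hKμ.resolve_right (by linarith)).2
        have hθ₀μ : θ₀ ≤ μ := (hθ₀le 0).trans (hθ 0).2
        nlinarith
      · intro n
        have h1 : 0 ≤ μ - θ n := sub_nonneg.2 (hθ n).2
        have h2 : μ - θ n ≤ μ - θ₀ := by linarith [hθ₀le n]
        have h3 : (μ - θ n) ^ 2 ≤ (μ - θ₀) ^ 2 := by nlinarith
        nlinarith [mul_le_mul_of_nonneg_left h3 hK.le]
  refine ⟨Real.sqrt (C * Real.sqrt μ / δ), fun n => ?_⟩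
  apply Real.sqrt_le_sqrt
  have hIle : δ * (∫ x : ℝ, (deriv (u n) x) ^ 2) ≤ C * Real.sqrt (θ n) - 6 * α := by
    have := mul_le_mul_of_nonneg_right (hδle n) (hInonneg n)
    linarith [hkey n]
  have hsq : Real.sqrt (θ n) ≤ Real.sqrt μ := Real.sqrt_le_sqrt (hθ n).2
  rw [le_div_iff₀ hδ]
  nlinarith [mul_le_mul_of_nonneg_left hsq hC.le]
end
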